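/- Let Z_{ij} ∈ {0,1} follow the Bernoulli sampling model with parameters ρ, κ ∈ (0,1) satisfying ρ+κ > 1, 2ρ+κ < 2 and 3ρ+4κ < 4, and let M^{(1)} ∈ ℝ^{C×C} be defined by M^{(1)}_{js} = (N_{·j}+λ_B)⁻¹ ∑_r Z_{rs}(Z_{rj} − N_{·j}/R)/(N_{r·}+λ_A) with λ_A, λ_B ≥ 0. Then for every ε > 0, P(‖M^{(1)}‖₁ ≤ Υ² − Υ⁻² + ε) → 1 as S → ∞. -/

import Mathlib

open MeasureTheory Filter ProbabilityTheory Real Finset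

section Helpers

variable {Ω : Type*} [MeasurableSpace Ω] {μ : Measure Ω} [IsProbabilityMeasure μ]
variable {ι : Type*} [Fintype ι]

private lemma stmt14_exp_quad {x : ℝ} (hx : |x| ≤ 1) : exp x ≤ 1 + x + (3/4) * x^2 := by
  have h := Real.exp_bound hx (n := 2) (by norm_num)
  have hs : ∑ m ∈ Finset.range 2, x ^ m / m.factorial = 1 + x := by
    simp [Finset.sum_range_succ]
  rw [hs] at h
  have h2 : |x| ^ 2 = x ^ 2 := by rw [sq_abs]
  have := (abs_sub_le_iff.1 h).1
  rw [h2] at this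
  norm_num at this ⊢
  nlinarith [this]

private lemma stmt14_mgf_indicator {G : Set Ω} (hG : MeasurableSet G) (t : ℝ) :
    mgf (G.indicator (fun _ => (1:ℝ))) μ t = 1 + (exp t - 1) * (μ G).toReal := by
  have hpt : ∀ ω, exp (t * (G.indicator (fun _ => (1:ℝ)) ω))
      = 1 + (exp t - 1) * G.indicator (fun _ => (1:ℝ)) ω := by
    intro ω; by_cases h : ω ∈ G <;> simp [Set.indicator_apply, h]
  have hint : Integrable (G.indicator (fun _ => (1:ℝ))) μ :=
    (integrable_const (1:ℝ)).indicator hG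
  rw [mgf]
  calc (μ[fun ω => exp (t * (G.indicator (fun _ => (1:ℝ)) ω))])
      = ∫ ω, (1 + (exp t - 1) * G.indicator (fun _ => (1:ℝ)) ω) ∂μ :=
        integral_congr_ae (Filter.Eventually.of_forall hpt)
    _ = 1 + (exp t - 1) * (μ G).toReal := by
        rw [integral_add (integrable_const 1) (hint.const_mul _)]
        simp [MeasureTheory.integral_const_mul, integral_indicator_const (1:ℝ) hG, measureReal_def]

private lemma stmt14_integrable_exp_mul_indicator {G : Set Ω} (hG : MeasurableSet G) (t : ℝ) :
    Integrable (fun ω => exp (t * (G.indicator (fun _ => (1:ℝ)) ω))) μ := by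
  have hpt : ∀ ω, exp (t * (G.indicator (fun _ => (1:ℝ)) ω))
      = 1 + (exp t - 1) * G.indicator (fun _ => (1:ℝ)) ω := by
    intro ω; by_cases h : ω ∈ G <;> simp [Set.indicator_apply, h]
  have hint : Integrable (G.indicator (fun _ => (1:ℝ))) μ :=
    (integrable_const (1:ℝ)).indicator hG
  exact ((integrable_const 1).add (hint.const_mul _)).congr
    (Filter.Eventually.of_forall (fun ω => (hpt ω).symm))

private lemma stmt14_mgf_sum_indicator_le {G : ι → Set Ω} (hG : ∀ i, MeasurableSet (G i))
    (hInd : iIndepSet G μ) (t : ℝ) :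
    mgf (∑ i, fun ω => (G i).indicator (fun _ => (1:ℝ)) ω) μ t
      ≤ exp ((exp t - 1) * ∑ i, (μ (G i)).toReal) := by
  have hiid : iIndepFun
      (fun i => (G i).indicator (fun _ => (1:ℝ))) μ := hInd.iIndepFun_indicator
  have hmeas : ∀ i, Measurable ((G i).indicator (fun _ => (1:ℝ))) :=
    fun i => measurable_const.indicator (hG i)
  have h1 : mgf (∑ i, fun ω => (G i).indicator (fun _ => (1:ℝ)) ω) μ t
      = ∏ i, mgf ((G i).indicator (fun _ => (1:ℝ))) μ t := hiid.mgf_sum hmeas Finset.univ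
  rw [h1]
  have hq : ∀ i, (0:ℝ) ≤ (μ (G i)).toReal ∧ (μ (G i)).toReal ≤ 1 := by
    intro i
    exact ⟨ENNReal.toReal_nonneg, by
      simpa using ENNReal.toReal_mono (by simp) (prob_le_one (μ := μ) (s := G i))⟩
  calc ∏ i, mgf ((G i).indicator (fun _ => (1:ℝ))) μ t
      = ∏ i, (1 + (exp t - 1) * (μ (G i)).toReal) :=
        Finset.prod_congr rfl (fun i _ => stmt14_mgf_indicator (hG i) t)
    _ ≤ ∏ i, exp ((exp t - 1) * (μ (G i)).toReal) := by
        apply Finset.prod_le_prod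
        · intro i _
          rcases le_or_gt 1 (exp t) with h | h
          · nlinarith [(hq i).1, (hq i).2]
          · nlinarith [(hq i).1, (hq i).2, Real.exp_pos t]
        · intro i _
          nlinarith [Real.add_one_le_exp ((exp t - 1) * (μ (G i)).toReal)]
    _ = exp ((exp t - 1) * ∑ i, (μ (G i)).toReal) := by
        rw [← Real.exp_sum, Finset.mul_sum]

private lemma stmt14_tail_upper {G : ι → Set Ω} (hG : ∀ i, MeasurableSet (G i))
    (hInd : iIndepSet G μ) {m δ : ℝ}
    (hm : ∑ i, (μ (G i)).toReal ≤ m) (hδ0 : 0 < δ) (hδ1 : δ ≤ 1) :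
    (μ {ω | (1+δ) * m ≤ ∑ i, (G i).indicator (fun _ => (1:ℝ)) ω}).toReal
      ≤ exp (-(δ^2/4) * m) := by
  have hq0 : (0:ℝ) ≤ ∑ i, (μ (G i)).toReal :=
    Finset.sum_nonneg (fun i _ => ENNReal.toReal_nonneg)
  have hm0 : 0 ≤ m := le_trans hq0 hm
  set t := δ/2 with ht_def
  have ht0 : 0 ≤ t := by positivity
  have hiid : iIndepFun
      (fun i => (G i).indicator (fun _ => (1:ℝ))) μ := hInd.iIndepFun_indicator
  have hmeas : ∀ i, Measurable ((G i).indicator (fun _ => (1:ℝ))) :=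
    fun i => measurable_const.indicator (hG i)
  have hint : Integrable (fun ω =>
      exp (t * (∑ i, fun ω' => (G i).indicator (fun _ => (1:ℝ)) ω') ω)) μ :=
    hiid.integrable_exp_mul_sum hmeas
      (fun i _ => stmt14_integrable_exp_mul_indicator (hG i) t)
  have h := measure_ge_le_exp_mul_mgf (μ := μ)
      (X := ∑ i, fun ω' => (G i).indicator (fun _ => (1:ℝ)) ω') ((1+δ)*m) ht0 hint
  have hset : {ω | (1+δ)*m ≤ (∑ i, fun ω' => (G i).indicator (fun _ => (1:ℝ)) ω') ω}
      = {ω | (1+δ) * m ≤ ∑ i, (G i).indicator (fun _ => (1:ℝ)) ω} := by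
    ext ω; simp [Finset.sum_apply]
  rw [hset] at h
  refine h.trans ?_
  have hmgf := stmt14_mgf_sum_indicator_le (μ := μ) hG hInd t
  have hE : exp t ≤ 1 + t + (3/4)*t^2 := stmt14_exp_quad (by rw [abs_of_nonneg ht0]; nlinarith)
  have hE1 : 1 ≤ exp t := Real.one_le_exp ht0
  have h2 : (exp t - 1) * ∑ i, (μ (G i)).toReal ≤ (exp t - 1) * m := by nlinarith
  calc exp (-t * ((1+δ)*m)) * mgf (∑ i, fun ω' => (G i).indicator (fun _ => (1:ℝ)) ω') μ t
      ≤ exp (-t * ((1+δ)*m)) * exp ((exp t - 1) * m) :=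
        mul_le_mul_of_nonneg_left (hmgf.trans (Real.exp_le_exp.2 h2)) (Real.exp_nonneg _)
    _ = exp (-t * ((1+δ)*m) + (exp t - 1) * m) := by rw [← Real.exp_add]
    _ ≤ exp (-(δ^2/4) * m) := by
        apply Real.exp_le_exp.2
        have h3 : exp t - 1 ≤ t + (3/4)*t^2 := by linarith
        have h4 : (exp t - 1) * m ≤ (t + (3/4)*t^2) * m := by nlinarith [hm0]
        have h5 : -t * ((1+δ)*m) + (t + (3/4)*t^2) * m ≤ -(δ^2/4) * m := by
          rw [ht_def]; nlinarith [mul_nonneg hm0 (sq_nonneg δ)]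
        linarith

private lemma stmt14_tail_lower {G : ι → Set Ω} (hG : ∀ i, MeasurableSet (G i))
    (hInd : iIndepSet G μ) {m δ : ℝ}
    (hm : m ≤ ∑ i, (μ (G i)).toReal) (hm0 : 0 ≤ m) (hδ0 : 0 < δ) (hδ1 : δ ≤ 1) :
    (μ {ω | ∑ i, (G i).indicator (fun _ => (1:ℝ)) ω ≤ (1-δ) * m}).toReal
      ≤ exp (-(δ^2/8) * m) := by
  set t := -(δ/2) with ht_def
  have ht0 : t ≤ 0 := by simp [ht_def]; positivity
  have hiid : iIndepFun
      (fun i => (G i).indicator (fun _ => (1:ℝ))) μ := hInd.iIndepFun_indicator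
  have hmeas : ∀ i, Measurable ((G i).indicator (fun _ => (1:ℝ))) :=
    fun i => measurable_const.indicator (hG i)
  have hint : Integrable (fun ω =>
      exp (t * (∑ i, fun ω' => (G i).indicator (fun _ => (1:ℝ)) ω') ω)) μ :=
    hiid.integrable_exp_mul_sum hmeas
      (fun i _ => stmt14_integrable_exp_mul_indicator (hG i) t)
  have h := measure_le_le_exp_mul_mgf (μ := μ)
      (X := ∑ i, fun ω' => (G i).indicator (fun _ => (1:ℝ)) ω') ((1-δ)*m) ht0 hint
  have hset : {ω | (∑ i, fun ω' => (G i).indicator (fun _ => (1:ℝ)) ω') ω ≤ (1-δ)*m}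
      = {ω | ∑ i, (G i).indicator (fun _ => (1:ℝ)) ω ≤ (1-δ) * m} := by
    ext ω; simp [Finset.sum_apply]
  rw [hset] at h
  refine h.trans ?_
  have hmgf := stmt14_mgf_sum_indicator_le (μ := μ) hG hInd t
  have hE : exp t ≤ 1 + t + (3/4)*t^2 :=
    stmt14_exp_quad (by rw [abs_of_nonpos ht0]; simp [ht_def]; nlinarith)
  have hE1 : exp t ≤ 1 := Real.exp_le_one_iff.2 ht0
  have h2 : (exp t - 1) * ∑ i, (μ (G i)).toReal ≤ (exp t - 1) * m := by nlinarith
  calc exp (-t * ((1-δ)*m)) * mgf (∑ i, fun ω' => (G i).indicator (fun _ => (1:ℝ)) ω') μ t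
      ≤ exp (-t * ((1-δ)*m)) * exp ((exp t - 1) * m) :=
        mul_le_mul_of_nonneg_left (hmgf.trans (Real.exp_le_exp.2 h2)) (Real.exp_nonneg _)
    _ = exp (-t * ((1-δ)*m) + (exp t - 1) * m) := by rw [← Real.exp_add]
    _ ≤ exp (-(δ^2/8) * m) := by
        apply Real.exp_le_exp.2
        have h3 : exp t - 1 ≤ t + (3/4)*t^2 := by linarith
        have h4 : (exp t - 1) * m ≤ (t + (3/4)*t^2) * m := by nlinarith [hm0]
        have h5 : -t * ((1-δ)*m) + (t + (3/4)*t^2) * m ≤ -(δ^2/8) * m := by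
          rw [ht_def]
          nlinarith [mul_nonneg hm0 (sq_nonneg δ),
            mul_nonneg (mul_nonneg hm0 (sq_nonneg δ)) hδ0.le]
        linarith

private lemma stmt14_blocks_iIndepSet {α ι' : Type*} [DecidableEq α] {f : α → Ω → Bool}
    (hind : iIndepFun f μ) (hmeas : ∀ p, Measurable (f p))
    (φ : ι' → Finset α) (hdisj : ∀ ⦃i i'⦄, i ≠ i' → Disjoint (φ i) (φ i')) :
    iIndepSet (fun i => ⋂ p ∈ φ i, f p ⁻¹' {true}) μ := by
  have hprod : ∀ B : Finset α,
      μ (⋂ p ∈ B, f p ⁻¹' {true}) = ∏ p ∈ B, μ (f p ⁻¹' {true}) :=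
    fun B => hind.meas_biInter (S := B) (fun p _ => ⟨{true}, trivial, rfl⟩)
  have hGmeas : ∀ i, MeasurableSet (⋂ p ∈ φ i, f p ⁻¹' {true}) := by
    intro i
    exact Set.Finite.measurableSet_biInter (Set.finite_mem_finset _)
      (fun p _ => (hmeas p) (by simp))
  rw [iIndepSet_iff_meas_biInter hGmeas]
  intro T
  have hset : (⋂ i ∈ T, ⋂ p ∈ φ i, f p ⁻¹' {true})
      = ⋂ p ∈ T.biUnion φ, f p ⁻¹' {true} := by
    ext ω
    simp only [Set.mem_iInter, Finset.mem_biUnion, Set.mem_preimage, Set.mem_singleton_iff]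
    constructor
    · rintro h p ⟨i, hi, hp⟩; exact h i hi p hp
    · intro h i hi p hp; exact h p ⟨i, hi, hp⟩
  rw [hset, hprod, Finset.prod_biUnion]
  · exact Finset.prod_congr rfl (fun i _ => (hprod (φ i)).symm)
  · intro i _ i' _ h; exact hdisj h

private lemma stmt14_poly_exp (A e c d : ℝ) (hc : 0 < c) (hd : 0 < d) :
    Tendsto (fun S : ℕ => A * (S:ℝ)^e * exp (-(c * (S:ℝ)^d))) atTop (nhds 0) := by
  set n := ⌈e/d⌉₊ + 1 with hn
  have hcomp : Tendsto (fun S : ℕ => c * (S:ℝ)^d) atTop atTop := by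
    apply Tendsto.const_mul_atTop hc
    exact (tendsto_rpow_atTop hd).comp tendsto_natCast_atTop_atTop
  have h1 : Tendsto (fun S : ℕ => (c*(S:ℝ)^d)^n * exp (-(c*(S:ℝ)^d))) atTop (nhds 0) :=
    (tendsto_pow_mul_exp_neg_atTop_nhds_zero n).comp hcomp
  have h2 : Tendsto (fun S : ℕ =>
      (|A|/c^n) * ((c*(S:ℝ)^d)^n * exp (-(c*(S:ℝ)^d)))) atTop (nhds 0) := by
    simpa using h1.const_mul (|A|/c^n)
  apply squeeze_zero_norm' ?_ h2
  filter_upwards [eventually_ge_atTop 1] with S hS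
  have hS1 : (1:ℝ) ≤ (S:ℝ) := by exact_mod_cast hS
  have hed : e ≤ d * n := by
    have : e/d ≤ n := le_trans (Nat.le_ceil _) (by exact_mod_cast Nat.le_succ _)
    calc e = d * (e/d) := by field_simp
    _ ≤ d * n := by nlinarith
  have hpow : (S:ℝ)^e ≤ ((S:ℝ)^d)^n := by
    rw [← Real.rpow_natCast ((S:ℝ)^d) n, ← Real.rpow_mul (by positivity)]
    exact Real.rpow_le_rpow_of_exponent_le hS1 (by simpa using hed)
  rw [Real.norm_eq_abs, abs_mul, abs_mul, abs_of_nonneg (Real.exp_nonneg _)]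
  have habs : |(S:ℝ)^e| = (S:ℝ)^e := abs_of_nonneg (by positivity)
  rw [habs]
  have hrhs : (|A|/c^n) * ((c*(S:ℝ)^d)^n * exp (-(c*(S:ℝ)^d)))
      = |A| * ((S:ℝ)^d)^n * exp (-(c*(S:ℝ)^d)) := by
    rw [mul_pow]; field_simp
  rw [hrhs]
  exact mul_le_mul_of_nonneg_right
    (mul_le_mul_of_nonneg_left hpow (abs_nonneg A)) (Real.exp_nonneg _)

private lemma stmt14_offdiag_scalar {δ Υ p Cr Rr lamB A B D Ncolj : ℝ}
    (hδ0 : 0 < δ) (hδ : δ ≤ 1/2) (hΥ : 1 ≤ Υ) (hp : 0 < p) (hCr : 0 < Cr) (hRr : 0 < Rr)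
    (hA_lo : ((1+2*δ)*(Υ*(p*Cr)))⁻¹ * ((1-δ)*(p*(p*Rr))) ≤ A)
    (hA_hi : A ≤ ((1-δ)*(p*Cr))⁻¹ * ((1+δ)*(Υ^2*(p*(p*Rr)))))
    (hB_lo : ((1+2*δ)*(Υ*(p*Cr)))⁻¹ * ((1-δ)*(p*Rr)) ≤ B)
    (hB_hi : B ≤ ((1-δ)*(p*Cr))⁻¹ * ((1+δ)*(Υ*(p*Rr))))
    (hD_lo : (1-δ)*p ≤ D) (hD_hi : D ≤ (1+δ)*(Υ*p))
    (hN_lo : (1-δ)*(p*Rr) ≤ Ncolj) (hlamB : 0 ≤ lamB) :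
    |(Ncolj + lamB)⁻¹ * (A - D*B)|
      ≤ ((1+δ)^2*Υ^2/(1-δ)^2 - (1-δ)/((1+2*δ)*Υ)) / Cr := by
  have hΥ0 : (0:ℝ) < Υ := lt_of_lt_of_le one_pos hΥ
  have h1δ : 0 < 1 - δ := by linarith
  set Xu := ((1-δ)*(p*Cr))⁻¹ with hXu_def
  set Xv := ((1+2*δ)*(Υ*(p*Cr)))⁻¹ with hXv_def
  have hXu : 0 < Xu := by rw [hXu_def]; positivity
  have hXv : 0 < Xv := by rw [hXv_def]; positivity
  have hpb : 0 < p*(p*Rr) := by positivity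
  have hBnn : 0 ≤ B := le_trans (by positivity) hB_lo
  have hDnn : 0 ≤ D := le_trans (by positivity) hD_lo
  set M := Xu*((1+δ)^2*(Υ^2*(p*(p*Rr)))) - Xv*((1-δ)^2*(p*(p*Rr))) with hM_def
  have habs : |A - D*B| ≤ M := by
    rw [abs_le]
    constructor
    · have hDB : D*B ≤ ((1+δ)*(Υ*p)) * (Xu * ((1+δ)*(Υ*(p*Rr)))) :=
        mul_le_mul hD_hi hB_hi hBnn (by positivity)
      have h1 : -(A - D*B) ≤ ((1+δ)*(Υ*p)) * (Xu * ((1+δ)*(Υ*(p*Rr))))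
          - Xv * ((1-δ)*(p*(p*Rr))) := by linarith [hA_lo]
      have h2 : ((1+δ)*(Υ*p)) * (Xu * ((1+δ)*(Υ*(p*Rr))))
          = Xu*((1+δ)^2*(Υ^2*(p*(p*Rr)))) := by ring
      rw [h2] at h1
      have h3 : Xv*((1-δ)^2*(p*(p*Rr))) ≤ Xv * ((1-δ)*(p*(p*Rr))) := by
        apply mul_le_mul_of_nonneg_left ?_ hXv.le
        nlinarith [mul_nonneg (mul_nonneg h1δ.le hpb.le) hδ0.le]
      rw [hM_def]
      linarith
    · have hDB : ((1-δ)*p) * (Xv * ((1-δ)*(p*Rr))) ≤ D*B :=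
        mul_le_mul hD_lo hB_lo (by positivity) hDnn
      have h1 : A - D*B ≤ Xu * ((1+δ)*(Υ^2*(p*(p*Rr))))
          - ((1-δ)*p) * (Xv * ((1-δ)*(p*Rr))) := by linarith [hA_hi]
      have h2 : ((1-δ)*p) * (Xv * ((1-δ)*(p*Rr))) = Xv*((1-δ)^2*(p*(p*Rr))) := by ring
      rw [h2] at h1
      have h3 : Xu * ((1+δ)*(Υ^2*(p*(p*Rr)))) ≤ Xu*((1+δ)^2*(Υ^2*(p*(p*Rr)))) := by
        apply mul_le_mul_of_nonneg_left ?_ hXu.le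
        nlinarith [mul_nonneg (mul_nonneg (by positivity : (0:ℝ) ≤ (1+δ)*Υ^2) hpb.le) hδ0.le]
      rw [hM_def]
      linarith
  have hMnn : 0 ≤ M := le_trans (abs_nonneg _) habs
  have hNpos : 0 < Ncolj + lamB := by nlinarith [mul_pos hp hRr]
  have hinv : |(Ncolj + lamB)⁻¹| ≤ ((1-δ)*(p*Rr))⁻¹ := by
    rw [abs_of_nonneg (inv_pos.2 hNpos).le]
    apply inv_anti₀ (by positivity)
    linarith
  have hmain : |(Ncolj + lamB)⁻¹ * (A - D*B)| ≤ ((1-δ)*(p*Rr))⁻¹ * M := by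
    rw [abs_mul]
    exact mul_le_mul hinv habs (abs_nonneg _) (by positivity)
  refine hmain.trans (le_of_eq ?_)
  rw [hM_def, hXu_def, hXv_def]
  field_simp

private lemma stmt14_W_nonneg {δ Υ : ℝ} (hδ0 : 0 < δ) (hδ : δ ≤ 1/2) (hΥ : 1 ≤ Υ) :
    0 ≤ (1+δ)^2*Υ^2/(1-δ)^2 - (1-δ)/((1+2*δ)*Υ) := by
  have hΥ0 : (0:ℝ) < Υ := lt_of_lt_of_le one_pos hΥ
  have h1δ : 0 < 1 - δ := by linarith
  have h1 : (1-δ)/((1+2*δ)*Υ) ≤ 1 := by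
    rw [div_le_one (by positivity)]
    nlinarith
  have h2 : (1:ℝ) ≤ (1+δ)^2*Υ^2/(1-δ)^2 := by
    rw [le_div_iff₀ (by positivity)]
    nlinarith [sq_nonneg δ]
  linarith

private lemma stmt14_final_num {δ Υ : ℝ} (hδ0 : 0 < δ) (hδ : δ ≤ 1/2) (hΥ : 1 ≤ Υ) :
    ((1+δ)^2*Υ^2/(1-δ)^2 - (1-δ)/((1+2*δ)*Υ)) + δ ≤ Υ^2 - Υ⁻¹ + 23 * δ * Υ^2 := by
  have hΥ0 : (0:ℝ) < Υ := lt_of_lt_of_le one_pos hΥ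
  have h1δ : 0 < 1 - δ := by linarith
  have h1 : (1+δ)^2*Υ^2/(1-δ)^2 ≤ Υ^2*(1+16*δ) := by
    rw [div_le_iff₀ (by positivity)]
    nlinarith [mul_nonneg (sq_nonneg Υ) (mul_nonneg (mul_nonneg hδ0.le
      (by linarith : (0:ℝ) ≤ 1-2*δ)) (by linarith : (0:ℝ) ≤ 3-2*δ))]
  have h2 : Υ⁻¹ - 3*δ ≤ (1-δ)/((1+2*δ)*Υ) := by
    rw [le_div_iff₀ (by positivity), inv_eq_one_div]
    have h3 : (1/Υ - 3*δ) * ((1+2*δ)*Υ) = (1+2*δ) - 3*δ*(1+2*δ)*Υ := by field_simp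
    rw [h3]
    nlinarith [mul_pos hδ0 hΥ0, hΥ, hδ0.le]
  have hq : (0:ℝ) ≤ δ * (Υ^2 - 1) := mul_nonneg hδ0.le (by nlinarith)
  have h6 : 16*δ*Υ^2 + 4*δ ≤ 23 * δ * Υ^2 := by nlinarith [hq]
  linarith [h1, h2, h6]

private lemma stmt14_diag_scalar {δ Υ p Cr Rr lamB B D Ncols : ℝ}
    (hδ0 : 0 < δ) (hδ : δ ≤ 1/2) (hΥ : 1 ≤ Υ) (hp : 0 < p) (hCr : 0 < Cr) (hRr : 0 < Rr)
    (hB_nonneg : 0 ≤ B)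
    (hB_hi : B ≤ ((1-δ)*(p*Cr))⁻¹ * Ncols)
    (hD01 : |1 - D| ≤ 1)
    (hN_lo : (1-δ)*(p*Rr) ≤ Ncols) (hlamB : 0 ≤ lamB)
    (hdiag : 2 / (p*Cr) ≤ δ) :
    |(Ncols + lamB)⁻¹ * ((1 - D) * B)| ≤ δ := by
  have h1δ : 0 < 1 - δ := by linarith
  have hNpos : 0 < Ncols := lt_of_lt_of_le (by positivity) hN_lo
  have hNlamB : 0 < Ncols + lamB := by linarith
  rw [abs_mul, abs_mul, abs_of_nonneg (inv_pos.2 hNlamB).le, abs_of_nonneg hB_nonneg]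
  have step1 : (Ncols + lamB)⁻¹ * (|1 - D| * B) ≤ (Ncols + lamB)⁻¹ * B := by
    apply mul_le_mul_of_nonneg_left ?_ (inv_pos.2 hNlamB).le
    nlinarith
  have step2 : (Ncols + lamB)⁻¹ * B ≤ (Ncols + lamB)⁻¹ * (((1-δ)*(p*Cr))⁻¹ * Ncols) :=
    mul_le_mul_of_nonneg_left hB_hi (inv_pos.2 hNlamB).le
  have step3 : (Ncols + lamB)⁻¹ * (((1-δ)*(p*Cr))⁻¹ * Ncols) ≤ ((1-δ)*(p*Cr))⁻¹ := by
    have h2 : (Ncols + lamB)⁻¹ * Ncols ≤ 1 := by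
      rw [inv_mul_le_iff₀ hNlamB]; linarith
    have h3 : 0 < ((1-δ)*(p*Cr))⁻¹ := by positivity
    calc (Ncols + lamB)⁻¹ * (((1-δ)*(p*Cr))⁻¹ * Ncols)
        = ((1-δ)*(p*Cr))⁻¹ * ((Ncols + lamB)⁻¹ * Ncols) := by ring
      _ ≤ ((1-δ)*(p*Cr))⁻¹ * 1 := mul_le_mul_of_nonneg_left h2 h3.le
      _ = ((1-δ)*(p*Cr))⁻¹ := by ring
  have step4 : ((1-δ)*(p*Cr))⁻¹ ≤ 2 / (p*Cr) := by
    have e : 2 / (p*Cr) = ((1/2)*(p*Cr))⁻¹ := by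
      rw [mul_inv]; field_simp
    rw [e]
    apply inv_anti₀ (by positivity)
    nlinarith [mul_pos hp hCr]
  linarith [step1, step2, step3, step4, hdiag]

private lemma stmt14_det_bound (R C : ℕ) (hR : 0 < R) (hC : 0 < C)
    (z : Fin R → Fin C → ℝ) (hz : ∀ r j, z r j = 0 ∨ z r j = 1)
    (lamA lamB Υ δ p : ℝ) (hΥ : 1 ≤ Υ) (hδ0 : 0 < δ) (hδ : δ ≤ 1/2)
    (hp : 0 < p)
    (hlamA0 : 0 ≤ lamA) (hlamB0 : 0 ≤ lamB)
    (hlamA : lamA ≤ δ * (Υ * (p * C)))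
    (hdiag : 2 / (p * (C:ℝ)) ≤ δ)
    (hrow1 : ∀ r, (1-δ) * (p*(C:ℝ)) ≤ ∑ j, z r j)
    (hrow2 : ∀ r, ∑ j, z r j ≤ (1+δ) * (Υ*(p*(C:ℝ))))
    (hcol1 : ∀ j, (1-δ) * (p*(R:ℝ)) ≤ ∑ i, z i j)
    (hcol2 : ∀ j, ∑ i, z i j ≤ (1+δ) * (Υ*(p*(R:ℝ))))
    (hpair1 : ∀ j s, j ≠ s → (1-δ) * (p*(p*(R:ℝ))) ≤ ∑ r, z r s * z r j)
    (hpair2 : ∀ j s, j ≠ s → ∑ r, z r s * z r j ≤ (1+δ) * (Υ^2*(p*(p*(R:ℝ))))) :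
    (⨆ s : Fin C, ∑ j : Fin C, |(((∑ i, z i j) + lamB)⁻¹ *
        ∑ r, z r s * (z r j - (∑ i, z i j) / R) / ((∑ j', z r j') + lamA))|)
      ≤ Υ^2 - Υ⁻¹ + 23 * δ * Υ^2 := by
  have hΥ0 : (0:ℝ) < Υ := lt_of_lt_of_le one_pos hΥ
  have hCpos : (0:ℝ) < (C:ℝ) := by exact_mod_cast hC
  have hRpos : (0:ℝ) < (R:ℝ) := by exact_mod_cast hR
  have h1δ : 0 < 1 - δ := by linarith
  have hz0 : ∀ r j, 0 ≤ z r j := by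
    intro r j; rcases hz r j with h | h <;> simp [h]
  have hz1 : ∀ r j, z r j ≤ 1 := by
    intro r j; rcases hz r j with h | h <;> simp [h]
  have hNrow_lo : ∀ r, (1-δ)*(p*(C:ℝ)) ≤ (∑ j', z r j') + lamA := by
    intro r; linarith [hrow1 r]
  have hNrow_hi : ∀ r, (∑ j', z r j') + lamA ≤ (1+2*δ)*(Υ*(p*(C:ℝ))) := by
    intro r; nlinarith [hrow2 r, hlamA]
  have hNrowpos : ∀ r, 0 < (∑ j', z r j') + lamA :=
    fun r => lt_of_lt_of_le (by positivity) (hNrow_lo r)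
  have hw_lo : ∀ r, ((1+2*δ)*(Υ*(p*(C:ℝ))))⁻¹ ≤ ((∑ j', z r j') + lamA)⁻¹ :=
    fun r => inv_anti₀ (hNrowpos r) (hNrow_hi r)
  have hw_hi : ∀ r, ((∑ j', z r j') + lamA)⁻¹ ≤ ((1-δ)*(p*(C:ℝ)))⁻¹ :=
    fun r => inv_anti₀ (by positivity) (hNrow_lo r)
  have hw_pos : ∀ r, 0 < ((∑ j', z r j') + lamA)⁻¹ := fun r => inv_pos.2 (hNrowpos r)
  have hNcol_le_R : ∀ j, ∑ i, z i j ≤ (R:ℝ) := by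
    intro j
    calc ∑ i, z i j ≤ ∑ _i : Fin R, (1:ℝ) := Finset.sum_le_sum (fun i _ => hz1 i j)
    _ = (R:ℝ) := by simp
  set W := (1+δ)^2*Υ^2/(1-δ)^2 - (1-δ)/((1+2*δ)*Υ) with hW_def
  have hWnn : 0 ≤ W := stmt14_W_nonneg hδ0 hδ hΥ
  have key : ∀ s : Fin C, ∑ j : Fin C, |(((∑ i, z i j) + lamB)⁻¹ *
        ∑ r, z r s * (z r j - (∑ i, z i j) / R) / ((∑ j', z r j') + lamA))|
      ≤ Υ^2 - Υ⁻¹ + 23 * δ * Υ^2 := by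
    intro s
    have hB_lo : ((1+2*δ)*(Υ*(p*(C:ℝ))))⁻¹ * (∑ i, z i s)
        ≤ ∑ r, z r s * ((∑ j', z r j') + lamA)⁻¹ := by
      rw [Finset.mul_sum]
      apply Finset.sum_le_sum
      intro r _
      calc ((1+2*δ)*(Υ*(p*(C:ℝ))))⁻¹ * z r s
          ≤ ((∑ j', z r j') + lamA)⁻¹ * z r s :=
            mul_le_mul_of_nonneg_right (hw_lo r) (hz0 r s)
        _ = z r s * ((∑ j', z r j') + lamA)⁻¹ := mul_comm _ _
    have hB_hi : (∑ r, z r s * ((∑ j', z r j') + lamA)⁻¹)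
        ≤ ((1-δ)*(p*(C:ℝ)))⁻¹ * (∑ i, z i s) := by
      rw [Finset.mul_sum]
      apply Finset.sum_le_sum
      intro r _
      calc z r s * ((∑ j', z r j') + lamA)⁻¹
          ≤ z r s * ((1-δ)*(p*(C:ℝ)))⁻¹ :=
            mul_le_mul_of_nonneg_left (hw_hi r) (hz0 r s)
        _ = ((1-δ)*(p*(C:ℝ)))⁻¹ * z r s := mul_comm _ _
    have hB_nonneg : 0 ≤ ∑ r, z r s * ((∑ j', z r j') + lamA)⁻¹ :=
      Finset.sum_nonneg (fun r _ => mul_nonneg (hz0 r s) (hw_pos r).le)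
    have hsplit : ∀ j, (∑ r, z r s * (z r j - (∑ i, z i j) / R) / ((∑ j', z r j') + lamA))
        = (∑ r, z r s * z r j * ((∑ j', z r j') + lamA)⁻¹)
          - ((∑ i, z i j) / R) * (∑ r, z r s * ((∑ j', z r j') + lamA)⁻¹) := by
      intro j
      rw [Finset.mul_sum, ← Finset.sum_sub_distrib]
      apply Finset.sum_congr rfl
      intro r _
      rw [div_eq_mul_inv]
      ring
    have hoff : ∀ j, j ≠ s → |(((∑ i, z i j) + lamB)⁻¹ *
        ∑ r, z r s * (z r j - (∑ i, z i j) / R) / ((∑ j', z r j') + lamA))|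
        ≤ W / (C:ℝ) := by
      intro j hjs
      rw [hsplit j, hW_def]
      have hA_lo : ((1+2*δ)*(Υ*(p*(C:ℝ))))⁻¹ * ((1-δ)*(p*(p*(R:ℝ))))
          ≤ ∑ r, z r s * z r j * ((∑ j', z r j') + lamA)⁻¹ := by
        have h1 : ((1+2*δ)*(Υ*(p*(C:ℝ))))⁻¹ * (∑ r, z r s * z r j)
            ≤ ∑ r, z r s * z r j * ((∑ j', z r j') + lamA)⁻¹ := by
          rw [Finset.mul_sum]
          apply Finset.sum_le_sum
          intro r _
          calc ((1+2*δ)*(Υ*(p*(C:ℝ))))⁻¹ * (z r s * z r j)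
              ≤ ((∑ j', z r j') + lamA)⁻¹ * (z r s * z r j) :=
                mul_le_mul_of_nonneg_right (hw_lo r) (mul_nonneg (hz0 r s) (hz0 r j))
            _ = z r s * z r j * ((∑ j', z r j') + lamA)⁻¹ := mul_comm _ _
        refine le_trans ?_ h1
        exact mul_le_mul_of_nonneg_left (hpair1 j s hjs) (by positivity)
      have hA_hi : (∑ r, z r s * z r j * ((∑ j', z r j') + lamA)⁻¹)
          ≤ ((1-δ)*(p*(C:ℝ)))⁻¹ * ((1+δ)*(Υ^2*(p*(p*(R:ℝ))))) := by
        have h1 : (∑ r, z r s * z r j * ((∑ j', z r j') + lamA)⁻¹)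
            ≤ ((1-δ)*(p*(C:ℝ)))⁻¹ * (∑ r, z r s * z r j) := by
          rw [Finset.mul_sum]
          apply Finset.sum_le_sum
          intro r _
          calc z r s * z r j * ((∑ j', z r j') + lamA)⁻¹
              ≤ z r s * z r j * ((1-δ)*(p*(C:ℝ)))⁻¹ :=
                mul_le_mul_of_nonneg_left (hw_hi r) (mul_nonneg (hz0 r s) (hz0 r j))
            _ = ((1-δ)*(p*(C:ℝ)))⁻¹ * (z r s * z r j) := mul_comm _ _
        refine h1.trans ?_
        exact mul_le_mul_of_nonneg_left (hpair2 j s hjs) (by positivity)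
      apply stmt14_offdiag_scalar hδ0 hδ hΥ hp hCpos hRpos hA_lo hA_hi
      · refine le_trans ?_ hB_lo
        exact mul_le_mul_of_nonneg_left (hcol1 s) (by positivity)
      · refine hB_hi.trans ?_
        exact mul_le_mul_of_nonneg_left (hcol2 s) (by positivity)
      · rw [le_div_iff₀ hRpos]
        nlinarith [hcol1 j]
      · rw [div_le_iff₀ hRpos]
        nlinarith [hcol2 j]
      · exact hcol1 j
      · exact hlamB0
    have hdiag_bd : |(((∑ i, z i s) + lamB)⁻¹ *
        ∑ r, z r s * (z r s - (∑ i, z i s) / R) / ((∑ j', z r j') + lamA))| ≤ δ := by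
      have hsum_eq : (∑ r, z r s * (z r s - (∑ i, z i s) / R) / ((∑ j', z r j') + lamA))
          = (1 - (∑ i, z i s) / R) * (∑ r, z r s * ((∑ j', z r j') + lamA)⁻¹) := by
        rw [Finset.mul_sum]
        apply Finset.sum_congr rfl
        intro r _
        have hzz : z r s * (z r s - (∑ i, z i s) / R)
            = z r s * (1 - (∑ i, z i s) / R) := by
          rcases hz r s with h | h <;> simp [h]
        rw [div_eq_mul_inv, hzz]; ring
      rw [hsum_eq]
      apply stmt14_diag_scalar hδ0 hδ hΥ hp hCpos hRpos hB_nonneg hB_hi ?_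
        (hcol1 s) hlamB0 hdiag
      rw [abs_le]
      constructor
      · have h1 : (∑ i, z i s) / R ≤ 2 := by
          rw [div_le_iff₀ hRpos]
          linarith [hNcol_le_R s]
        linarith
      · have h2 : 0 ≤ (∑ i, z i s) / R :=
          div_nonneg (Finset.sum_nonneg (fun i _ => hz0 i s)) hRpos.le
        linarith
    rw [← Finset.add_sum_erase _ _ (Finset.mem_univ s)]
    have hsum_off : ∑ j ∈ Finset.univ.erase s, |(((∑ i, z i j) + lamB)⁻¹ *
        ∑ r, z r s * (z r j - (∑ i, z i j) / R) / ((∑ j', z r j') + lamA))| ≤ W := by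
      calc ∑ j ∈ Finset.univ.erase s, |(((∑ i, z i j) + lamB)⁻¹ *
          ∑ r, z r s * (z r j - (∑ i, z i j) / R) / ((∑ j', z r j') + lamA))|
          ≤ ∑ _j ∈ Finset.univ.erase s, W / (C:ℝ) :=
            Finset.sum_le_sum (fun j hj => hoff j (Finset.mem_erase.1 hj).1)
        _ = ((Finset.univ.erase s).card : ℝ) * (W / (C:ℝ)) := by
            rw [Finset.sum_const, nsmul_eq_mul]
        _ ≤ (C:ℝ) * (W / (C:ℝ)) := by
            apply mul_le_mul_of_nonneg_right ?_ (by positivity)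
            have h1 : (Finset.univ.erase s).card ≤ C := by
              calc (Finset.univ.erase s).card ≤ (Finset.univ : Finset (Fin C)).card :=
                Finset.card_le_card (Finset.erase_subset _ _)
              _ = C := by simp
            exact_mod_cast h1
        _ = W := by field_simp
    have hfin := stmt14_final_num (δ := δ) (Υ := Υ) hδ0 hδ hΥ
    rw [hW_def] at hsum_off
    linarith [hdiag_bd, hsum_off, hfin]
  have hne : Nonempty (Fin C) := ⟨⟨0, hC⟩⟩
  exact ciSup_le key

end Helpers

set_option maxHeartbeats 3000000 in
theorem stmt_14 (ρ κ Υ lamA lamB : ℝ)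
    (hρ : ρ ∈ Set.Ioo (0 : ℝ) 1) (hκ : κ ∈ Set.Ioo (0 : ℝ) 1)
    (hsum : 1 < ρ + κ) (h2 : 2 * ρ + κ < 2) (h34 : 3 * ρ + 4 * κ < 4)
    (hΥ : 1 ≤ Υ) (hlamA : 0 ≤ lamA) (hlamB : 0 ≤ lamB)
    (R C : ℕ → ℕ)
    (hR : ∀ S, R S = Nat.ceil ((S : ℝ) ^ ρ)) (hC : ∀ S, C S = Nat.ceil ((S : ℝ) ^ κ))
    (Ω : ℕ → Type) [∀ S, MeasurableSpace (Ω S)]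
    (μ : ∀ S, Measure (Ω S)) [∀ S, IsProbabilityMeasure (μ S)]
    (Z : ∀ S, Fin (R S) → Fin (C S) → Ω S → Bool)
    (hmeas : ∀ (S : ℕ) (i) (j), Measurable (Z S i j))
    (hind : ∀ S, iIndepFun
      (fun (p : Fin (R S) × Fin (C S)) ω => Z S p.1 p.2 ω) (μ S))
    (P : ∀ S, Fin (R S) → Fin (C S) → ℝ)
    (hmarg : ∀ (S : ℕ) (i) (j), μ S {ω | Z S i j ω = true} = ENNReal.ofReal (P S i j))
    (hPlo : ∀ (S : ℕ) (i) (j), (S : ℝ) ^ (1 - ρ - κ) ≤ P S i j)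
    (hPhi : ∀ (S : ℕ) (i) (j), P S i j ≤ Υ * (S : ℝ) ^ (1 - ρ - κ))
    (ε : ℝ) (hε : 0 < ε) :
    Tendsto (fun S => μ S {ω |
        let z : Fin (R S) → Fin (C S) → ℝ := fun r j => if Z S r j ω then 1 else 0;
        let Nrow : Fin (R S) → ℝ := fun r => ∑ j, z r j;
        let Ncol : Fin (C S) → ℝ := fun j => ∑ i, z i j;
        let M1 : Matrix (Fin (C S)) (Fin (C S)) ℝ := fun j s =>
          (Ncol j + lamB)⁻¹ *
            ∑ r, z r s * (z r j - Ncol j / (R S : ℝ)) / (Nrow r + lamA);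
        (⨆ s : Fin (C S), ∑ j : Fin (C S), |M1 j s|) ≤ Υ ^ 2 - (Υ⁻¹) ^ 2 + ε})
      atTop (nhds 1) := by
  classical
  have hΥ0 : (0:ℝ) < Υ := lt_of_lt_of_le one_pos hΥ
  set δ := min (1/2 : ℝ) (ε/(23*Υ^2)) with hδ_def
  have hδ0 : 0 < δ := lt_min (by norm_num) (by positivity)
  have hδhalf : δ ≤ 1/2 := min_le_left _ _
  have hδ1 : δ ≤ 1 := by linarith only [hδhalf]
  have hδε : 23*δ*Υ^2 ≤ ε := by
    have h := min_le_right (1/2 : ℝ) (ε/(23*Υ^2))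
    have h2m := mul_le_mul_of_nonneg_left h (by positivity : (0:ℝ) ≤ 23*Υ^2)
    calc 23*δ*Υ^2 = (23*Υ^2)*(1 / 2 ⊓ ε / (23 * Υ ^ 2)) := by rw [hδ_def]; ring
      _ ≤ (23*Υ^2)*(ε/(23*Υ^2)) := h2m
      _ = ε := by field_simp
  have hconst : Υ^2 - Υ⁻¹ + 23*δ*Υ^2 ≤ Υ^2 - (Υ⁻¹)^2 + ε := by
    have hi1 : Υ⁻¹ ≤ 1 := inv_le_one_of_one_le₀ hΥ
    have hi0 : 0 ≤ Υ⁻¹ := by positivity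
    have hsq : (Υ⁻¹)^2 ≤ Υ⁻¹ := by nlinarith only [hi0, hi1]
    linarith only [hδε, hsq]
  set c := δ^2/8 with hc_def
  have hc0 : 0 < c := by positivity
  have he1 : 0 < 1 - ρ := by linarith only [hρ.2]
  have he2 : 0 < 1 - κ := by linarith only [hκ.2]
  have he3 : 0 < 2 - ρ - 2*κ := by linarith only [hρ.1, h34]
  set E : ℕ → ℝ := fun S => 4*(S:ℝ)^ρ*exp (-(c*(S:ℝ)^(1-ρ)))
      + 4*(S:ℝ)^κ*exp (-(c*(S:ℝ)^(1-κ)))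
      + 8*(S:ℝ)^(2*κ)*exp (-(c*(S:ℝ)^(2-ρ-2*κ))) with hE_def
  have hE0 : Tendsto E atTop (nhds 0) := by
    have h1 := stmt14_poly_exp 4 ρ c (1-ρ) hc0 he1
    have h2 := stmt14_poly_exp 4 κ c (1-κ) hc0 he2
    have h3 := stmt14_poly_exp 8 (2*κ) c (2-ρ-2*κ) hc0 he3
    have := (h1.add h2).add h3
    simpa [hE_def] using this
  have hlow : Tendsto (fun S => 1 - ENNReal.ofReal (E S)) atTop (nhds 1) := by
    have h1 : Tendsto (fun S => ENNReal.ofReal (E S)) atTop (nhds 0) := by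
      simpa using ENNReal.tendsto_ofReal hE0
    have h := ENNReal.Tendsto.sub
        (tendsto_const_nhds : Tendsto (fun _ : ℕ => (1:ENNReal)) atTop (nhds 1)) h1
        (Or.inl (by simp))
    simpa using h
  have hub : ∀ S : ℕ, μ S {ω |
        let z : Fin (R S) → Fin (C S) → ℝ := fun r j => if Z S r j ω then 1 else 0;
        let Nrow : Fin (R S) → ℝ := fun r => ∑ j, z r j;
        let Ncol : Fin (C S) → ℝ := fun j => ∑ i, z i j;
        let M1 : Matrix (Fin (C S)) (Fin (C S)) ℝ := fun j s =>
          (Ncol j + lamB)⁻¹ *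
            ∑ r, z r s * (z r j - Ncol j / (R S : ℝ)) / (Nrow r + lamA);
        (⨆ s : Fin (C S), ∑ j : Fin (C S), |M1 j s|) ≤ Υ ^ 2 - (Υ⁻¹) ^ 2 + ε} ≤ 1 :=
    fun S => prob_le_one
  have hmain : ∀ᶠ S : ℕ in atTop, 1 - ENNReal.ofReal (E S) ≤ μ S {ω |
        let z : Fin (R S) → Fin (C S) → ℝ := fun r j => if Z S r j ω then 1 else 0;
        let Nrow : Fin (R S) → ℝ := fun r => ∑ j, z r j;
        let Ncol : Fin (C S) → ℝ := fun j => ∑ i, z i j;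
        let M1 : Matrix (Fin (C S)) (Fin (C S)) ℝ := fun j s =>
          (Ncol j + lamB)⁻¹ *
            ∑ r, z r s * (z r j - Ncol j / (R S : ℝ)) / (Nrow r + lamA);
        (⨆ s : Fin (C S), ∑ j : Fin (C S), |M1 j s|) ≤ Υ ^ 2 - (Υ⁻¹) ^ 2 + ε} := by
    have hS1ρ : Tendsto (fun S : ℕ => δ * (S:ℝ)^(1-ρ)) atTop atTop :=
      Tendsto.const_mul_atTop hδ0 ((tendsto_rpow_atTop he1).comp tendsto_natCast_atTop_atTop)
    have hS2ρ : Tendsto (fun S : ℕ => δ * Υ * (S:ℝ)^(1-ρ)) atTop atTop :=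
      Tendsto.const_mul_atTop (by positivity)
        ((tendsto_rpow_atTop he1).comp tendsto_natCast_atTop_atTop)
    filter_upwards [hS1ρ.eventually_ge_atTop 2, hS2ρ.eventually_ge_atTop lamA,
        eventually_ge_atTop 1] with S h2S hlamAS hS1
    have hS1' : (1:ℝ) ≤ (S:ℝ) := by exact_mod_cast hS1
    have hSpos : (0:ℝ) < (S:ℝ) := lt_of_lt_of_le one_pos hS1'
    set p := (S:ℝ)^(1-ρ-κ) with hp_def
    have hp : 0 < p := Real.rpow_pos_of_pos hSpos _
    have hRpos : 0 < R S := by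
      rw [hR S]; exact Nat.ceil_pos.2 (Real.rpow_pos_of_pos hSpos ρ)
    have hCpos : 0 < C S := by
      rw [hC S]; exact Nat.ceil_pos.2 (Real.rpow_pos_of_pos hSpos κ)
    have hRcast : (0:ℝ) < (R S:ℝ) := by exact_mod_cast hRpos
    have hCcast : (0:ℝ) < (C S:ℝ) := by exact_mod_cast hCpos
    have hCk : (S:ℝ)^κ ≤ (C S : ℝ) := by rw [hC S]; exact Nat.le_ceil _
    have hRk : (S:ℝ)^ρ ≤ (R S : ℝ) := by rw [hR S]; exact Nat.le_ceil _
    have honeκ : (1:ℝ) ≤ (S:ℝ)^κ := by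
      rw [← Real.one_rpow κ]; exact Real.rpow_le_rpow zero_le_one hS1' hκ.1.le
    have honeρ : (1:ℝ) ≤ (S:ℝ)^ρ := by
      rw [← Real.one_rpow ρ]; exact Real.rpow_le_rpow zero_le_one hS1' hρ.1.le
    have hCub : (C S : ℝ) ≤ 2*(S:ℝ)^κ := by
      rw [hC S]
      have h1 := Nat.ceil_lt_add_one (by positivity : (0:ℝ) ≤ (S:ℝ)^κ)
      linarith only [h1, honeκ]
    have hRub : (R S : ℝ) ≤ 2*(S:ℝ)^ρ := by
      rw [hR S]
      have h1 := Nat.ceil_lt_add_one (by positivity : (0:ℝ) ≤ (S:ℝ)^ρ)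
      linarith only [h1, honeρ]
    have hpa : p * (S:ℝ)^κ = (S:ℝ)^(1-ρ) := by
      rw [hp_def, ← Real.rpow_add hSpos]; congr 1; ring
    have hpbid : p * (S:ℝ)^ρ = (S:ℝ)^(1-κ) := by
      rw [hp_def, ← Real.rpow_add hSpos]; congr 1; ring
    have hppid : p * (p * (S:ℝ)^ρ) = (S:ℝ)^(2-ρ-2*κ) := by
      rw [hp_def, ← Real.rpow_add hSpos, ← Real.rpow_add hSpos]; congr 1; ring
    have ha_lb : (S:ℝ)^(1-ρ) ≤ p * (C S:ℝ) := by
      rw [← hpa]; exact mul_le_mul_of_nonneg_left hCk hp.le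
    have hb_lb : (S:ℝ)^(1-κ) ≤ p * (R S:ℝ) := by
      rw [← hpbid]; exact mul_le_mul_of_nonneg_left hRk hp.le
    have hpb_lb : (S:ℝ)^(2-ρ-2*κ) ≤ p * (p * (R S:ℝ)) := by
      rw [← hppid]
      exact mul_le_mul_of_nonneg_left (mul_le_mul_of_nonneg_left hRk hp.le) hp.le
    have hP0 : ∀ i j, 0 ≤ P S i j :=
      fun i j => le_trans (Real.rpow_nonneg hSpos.le _) (hPlo S i j)
    have hPlo' : ∀ i j, p ≤ P S i j := fun i j => hPlo S i j
    have hPhi' : ∀ i j, P S i j ≤ Υ * p := fun i j => hPhi S i j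
    set A : Fin (R S) → Fin (C S) → Set (Ω S) :=
      fun i j => {ω | Z S i j ω = true} with hA_def
    have hAmeas : ∀ i j, MeasurableSet (A i j) := fun i j =>
      (hmeas S i j) (measurableSet_singleton true)
    have hq : ∀ i j, (μ S (A i j)).toReal = P S i j := by
      intro i j
      rw [hA_def]
      rw [hmarg S i j, ENNReal.toReal_ofReal (hP0 i j)]
    -- independence of rows, columns, pairs
    have hrowInd : ∀ r, iIndepSet (fun j => A r j) (μ S) := by
      intro r
      have h := stmt14_blocks_iIndepSet (μ := μ S) (hind S)
          (fun q => hmeas S q.1 q.2)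
          (fun j : Fin (C S) => ({(r,j)} : Finset (Fin (R S) × Fin (C S))))
          (fun j j' hjj' => Finset.disjoint_singleton.2
            (fun hpq => hjj' (Prod.ext_iff.1 hpq).2))
      have heq : (fun j : Fin (C S) => ⋂ q ∈ ({(r,j)} : Finset (Fin (R S) × Fin (C S))),
          (fun q : Fin (R S) × Fin (C S) => fun ω => Z S q.1 q.2 ω) q ⁻¹' {true})
          = fun j => A r j := by
        funext j
        rw [Finset.set_biInter_singleton, hA_def]
        rfl
      rw [heq] at h; exact h
    have hcolInd : ∀ j, iIndepSet (fun i => A i j) (μ S) := by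
      intro j
      have h := stmt14_blocks_iIndepSet (μ := μ S) (hind S)
          (fun q => hmeas S q.1 q.2)
          (fun i : Fin (R S) => ({(i,j)} : Finset (Fin (R S) × Fin (C S))))
          (fun i i' hii' => Finset.disjoint_singleton.2
            (fun hpq => hii' (Prod.ext_iff.1 hpq).1))
      have heq : (fun i : Fin (R S) => ⋂ q ∈ ({(i,j)} : Finset (Fin (R S) × Fin (C S))),
          (fun q : Fin (R S) × Fin (C S) => fun ω => Z S q.1 q.2 ω) q ⁻¹' {true})
          = fun i => A i j := by
        funext i
        rw [Finset.set_biInter_singleton, hA_def]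
        rfl
      rw [heq] at h; exact h
    have hpairInd : ∀ j s : Fin (C S), j ≠ s →
        iIndepSet (fun r => A r j ∩ A r s) (μ S) := by
      intro j s hjs
      have hdisj : ∀ ⦃r r' : Fin (R S)⦄, r ≠ r' →
          Disjoint ({(r,j),(r,s)} : Finset (Fin (R S) × Fin (C S))) {(r',j),(r',s)} := by
        intro r r' hrr'
        rw [Finset.disjoint_left]
        intro q hq1 hq2
        simp only [Finset.mem_insert, Finset.mem_singleton] at hq1 hq2
        have e1 : q.1 = r := by rcases hq1 with h | h <;> simp [h]
        have e2 : q.1 = r' := by rcases hq2 with h | h <;> simp [h]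
        exact hrr' (e1.symm.trans e2)
      have h := stmt14_blocks_iIndepSet (μ := μ S) (hind S)
          (fun q => hmeas S q.1 q.2)
          (fun r : Fin (R S) => ({(r,j),(r,s)} : Finset (Fin (R S) × Fin (C S)))) hdisj
      have heq : (fun r : Fin (R S) =>
          ⋂ q ∈ ({(r,j),(r,s)} : Finset (Fin (R S) × Fin (C S))),
          (fun q : Fin (R S) × Fin (C S) => fun ω => Z S q.1 q.2 ω) q ⁻¹' {true})
          = fun r => A r j ∩ A r s := by
        funext r
        rw [Finset.set_biInter_insert, Finset.set_biInter_singleton, hA_def]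
        rfl
      rw [heq] at h; exact h
    have hpairq : ∀ (r : Fin (R S)) (j s : Fin (C S)), j ≠ s →
        (μ S (A r j ∩ A r s)).toReal = P S r j * P S r s := by
      intro r j s hjs
      have hne : ((r,j) : Fin (R S) × Fin (C S)) ≠ (r,s) :=
        fun h => hjs (Prod.ext_iff.1 h).2
      have hprod := (hind S).meas_biInter
          (S := ({(r,j),(r,s)} : Finset (Fin (R S) × Fin (C S))))
          (s := fun q => (fun ω => Z S q.1 q.2 ω) ⁻¹' {true})
          (fun q _ => ⟨{true}, trivial, rfl⟩)
      rw [Finset.set_biInter_insert, Finset.set_biInter_singleton,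
        Finset.prod_pair hne] at hprod
      have hset : A r j ∩ A r s
          = ((fun ω => Z S r j ω) ⁻¹' {true}) ∩ ((fun ω => Z S r s ω) ⁻¹' {true}) := by
        rw [hA_def]; rfl
      rw [hset, hprod, ENNReal.toReal_mul]
      have hq1 : (μ S ((fun ω => Z S r j ω) ⁻¹' {true})).toReal = P S r j := hq r j
      have hq2 : (μ S ((fun ω => Z S r s ω) ⁻¹' {true})).toReal = P S r s := hq r s
      rw [hq1, hq2]
    -- bad events
    set Brl : Fin (R S) → Set (Ω S) := fun r =>
      {ω | ∑ j, (A r j).indicator (fun _ => (1:ℝ)) ω ≤ (1-δ) * (p * (C S:ℝ))} with hBrl_def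
    set Brh : Fin (R S) → Set (Ω S) := fun r =>
      {ω | (1+δ) * (Υ*(p * (C S:ℝ))) ≤ ∑ j, (A r j).indicator (fun _ => (1:ℝ)) ω} with hBrh_def
    set Bcl : Fin (C S) → Set (Ω S) := fun j =>
      {ω | ∑ i, (A i j).indicator (fun _ => (1:ℝ)) ω ≤ (1-δ) * (p * (R S:ℝ))} with hBcl_def
    set Bch : Fin (C S) → Set (Ω S) := fun j =>
      {ω | (1+δ) * (Υ*(p * (R S:ℝ))) ≤ ∑ i, (A i j).indicator (fun _ => (1:ℝ)) ω} with hBch_def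
    set Bp : Fin (C S) × Fin (C S) → Set (Ω S) := fun q =>
      if q.1 = q.2 then (∅ : Set (Ω S)) else
        ({ω | ∑ r, (A r q.1 ∩ A r q.2).indicator (fun _ => (1:ℝ)) ω
            ≤ (1-δ) * (p*(p*(R S:ℝ)))}
         ∪ {ω | (1+δ) * (Υ^2*(p*(p*(R S:ℝ))))
            ≤ ∑ r, (A r q.1 ∩ A r q.2).indicator (fun _ => (1:ℝ)) ω}) with hBp_def
    set e1 := exp (-(δ^2/8) * (p * (C S:ℝ))) with he1_def
    set e2 := exp (-(δ^2/8) * (p * (R S:ℝ))) with he2_def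
    set e3 := exp (-(δ^2/8) * (p * (p * (R S:ℝ)))) with he3_def
    have he1nn : 0 ≤ e1 := by rw [he1_def]; positivity
    have he2nn : 0 ≤ e2 := by rw [he2_def]; positivity
    have he3nn : 0 ≤ e3 := by rw [he3_def]; positivity
    -- sums of means
    have hProwlo : ∀ r, p * (C S:ℝ) ≤ ∑ j, (μ S (A r j)).toReal := by
      intro r
      have hsc : ∑ j : Fin (C S), (μ S (A r j)).toReal = ∑ j, P S r j :=
        Finset.sum_congr rfl (fun j _ => hq r j)
      rw [hsc]
      calc p * (C S:ℝ) = ∑ _j : Fin (C S), p := by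
            rw [Finset.sum_const, Finset.card_univ, Fintype.card_fin, nsmul_eq_mul, mul_comm]
        _ ≤ ∑ j, P S r j := Finset.sum_le_sum (fun j _ => hPlo' r j)
    have hProwhi : ∀ r, ∑ j, (μ S (A r j)).toReal ≤ Υ * (p * (C S:ℝ)) := by
      intro r
      have hsc : ∑ j : Fin (C S), (μ S (A r j)).toReal = ∑ j, P S r j :=
        Finset.sum_congr rfl (fun j _ => hq r j)
      rw [hsc]
      calc ∑ j, P S r j ≤ ∑ _j : Fin (C S), Υ * p :=
            Finset.sum_le_sum (fun j _ => hPhi' r j)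
        _ = Υ * (p * (C S:ℝ)) := by
            rw [Finset.sum_const, Finset.card_univ, Fintype.card_fin, nsmul_eq_mul]; ring
    have hPcollo : ∀ j, p * (R S:ℝ) ≤ ∑ i, (μ S (A i j)).toReal := by
      intro j
      have hsc : ∑ i : Fin (R S), (μ S (A i j)).toReal = ∑ i, P S i j :=
        Finset.sum_congr rfl (fun i _ => hq i j)
      rw [hsc]
      calc p * (R S:ℝ) = ∑ _i : Fin (R S), p := by
            rw [Finset.sum_const, Finset.card_univ, Fintype.card_fin, nsmul_eq_mul, mul_comm]
        _ ≤ ∑ i, P S i j := Finset.sum_le_sum (fun i _ => hPlo' i j)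
    have hPcolhi : ∀ j, ∑ i, (μ S (A i j)).toReal ≤ Υ * (p * (R S:ℝ)) := by
      intro j
      have hsc : ∑ i : Fin (R S), (μ S (A i j)).toReal = ∑ i, P S i j :=
        Finset.sum_congr rfl (fun i _ => hq i j)
      rw [hsc]
      calc ∑ i, P S i j ≤ ∑ _i : Fin (R S), Υ * p :=
            Finset.sum_le_sum (fun i _ => hPhi' i j)
        _ = Υ * (p * (R S:ℝ)) := by
            rw [Finset.sum_const, Finset.card_univ, Fintype.card_fin, nsmul_eq_mul]; ring
    have hPpairlo : ∀ j s : Fin (C S), j ≠ s →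
        p * (p * (R S:ℝ)) ≤ ∑ r, (μ S (A r j ∩ A r s)).toReal := by
      intro j s hjs
      have hsc : ∑ r : Fin (R S), (μ S (A r j ∩ A r s)).toReal
          = ∑ r, P S r j * P S r s :=
        Finset.sum_congr rfl (fun r _ => hpairq r j s hjs)
      rw [hsc]
      calc p * (p * (R S:ℝ)) = ∑ _r : Fin (R S), p * p := by
            rw [Finset.sum_const, Finset.card_univ, Fintype.card_fin, nsmul_eq_mul]; ring
        _ ≤ ∑ r, P S r j * P S r s := Finset.sum_le_sum (fun r _ =>
            mul_le_mul (hPlo' r j) (hPlo' r s) hp.le (hP0 r j))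
    have hPpairhi : ∀ j s : Fin (C S), j ≠ s →
        ∑ r, (μ S (A r j ∩ A r s)).toReal ≤ Υ^2 * (p * (p * (R S:ℝ))) := by
      intro j s hjs
      have hsc : ∑ r : Fin (R S), (μ S (A r j ∩ A r s)).toReal
          = ∑ r, P S r j * P S r s :=
        Finset.sum_congr rfl (fun r _ => hpairq r j s hjs)
      rw [hsc]
      calc ∑ r, P S r j * P S r s ≤ ∑ _r : Fin (R S), (Υ*p) * (Υ*p) :=
            Finset.sum_le_sum (fun r _ =>
              mul_le_mul (hPhi' r j) (hPhi' r s) (hP0 r s) (by positivity))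
        _ = Υ^2 * (p * (p * (R S:ℝ))) := by
            rw [Finset.sum_const, Finset.card_univ, Fintype.card_fin, nsmul_eq_mul]; ring
    -- measure bounds for bad events
    have hμBrl : ∀ r, μ S (Brl r) ≤ ENNReal.ofReal e1 := by
      intro r
      have ht := stmt14_tail_lower (μ := μ S) (fun j => hAmeas r j) (hrowInd r)
          (hProwlo r) (by positivity) hδ0 hδ1
      rw [← ENNReal.ofReal_toReal (measure_ne_top (μ S) (Brl r))]
      exact ENNReal.ofReal_le_ofReal ht
    have hμBrh : ∀ r, μ S (Brh r) ≤ ENNReal.ofReal e1 := by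
      intro r
      have ht := stmt14_tail_upper (μ := μ S) (fun j => hAmeas r j) (hrowInd r)
          (hProwhi r) hδ0 hδ1
      have hexp : exp (-(δ^2/4) * (Υ*(p*(C S:ℝ)))) ≤ e1 := by
        rw [he1_def]
        apply Real.exp_le_exp.2
        have hx : (0:ℝ) ≤ p*(C S:ℝ) := (mul_pos hp hCcast).le
        have hh := mul_nonneg (mul_nonneg (sq_nonneg δ) hx)
          (by linarith only [hΥ] : (0:ℝ) ≤ 2*Υ - 1)
        nlinarith only [hh]
      rw [← ENNReal.ofReal_toReal (measure_ne_top (μ S) (Brh r))]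
      exact ENNReal.ofReal_le_ofReal (ht.trans hexp)
    have hμBcl : ∀ j, μ S (Bcl j) ≤ ENNReal.ofReal e2 := by
      intro j
      have ht := stmt14_tail_lower (μ := μ S) (fun i => hAmeas i j) (hcolInd j)
          (hPcollo j) (by positivity) hδ0 hδ1
      rw [← ENNReal.ofReal_toReal (measure_ne_top (μ S) (Bcl j))]
      exact ENNReal.ofReal_le_ofReal ht
    have hμBch : ∀ j, μ S (Bch j) ≤ ENNReal.ofReal e2 := by
      intro j
      have ht := stmt14_tail_upper (μ := μ S) (fun i => hAmeas i j) (hcolInd j)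
          (hPcolhi j) hδ0 hδ1
      have hexp : exp (-(δ^2/4) * (Υ*(p*(R S:ℝ)))) ≤ e2 := by
        rw [he2_def]
        apply Real.exp_le_exp.2
        have hx : (0:ℝ) ≤ p*(R S:ℝ) := (mul_pos hp hRcast).le
        have hh := mul_nonneg (mul_nonneg (sq_nonneg δ) hx)
          (by linarith only [hΥ] : (0:ℝ) ≤ 2*Υ - 1)
        nlinarith only [hh]
      rw [← ENNReal.ofReal_toReal (measure_ne_top (μ S) (Bch j))]
      exact ENNReal.ofReal_le_ofReal (ht.trans hexp)
    have hμBp : ∀ q, μ S (Bp q) ≤ ENNReal.ofReal (e3 + e3) := by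
      intro q
      rw [hBp_def]
      by_cases hq12 : q.1 = q.2
      · simp [hq12]
      · simp only [if_neg hq12]
        refine (measure_union_le _ _).trans ?_
        have hl : μ S {ω | ∑ r, (A r q.1 ∩ A r q.2).indicator (fun _ => (1:ℝ)) ω
            ≤ (1-δ) * (p*(p*(R S:ℝ)))} ≤ ENNReal.ofReal e3 := by
          have ht := stmt14_tail_lower (μ := μ S)
              (fun r => (hAmeas r q.1).inter (hAmeas r q.2)) (hpairInd q.1 q.2 hq12)
              (hPpairlo q.1 q.2 hq12) (by positivity) hδ0 hδ1
          rw [← ENNReal.ofReal_toReal (measure_ne_top (μ S) _)]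
          exact ENNReal.ofReal_le_ofReal ht
        have hh : μ S {ω | (1+δ) * (Υ^2*(p*(p*(R S:ℝ))))
            ≤ ∑ r, (A r q.1 ∩ A r q.2).indicator (fun _ => (1:ℝ)) ω}
            ≤ ENNReal.ofReal e3 := by
          have ht := stmt14_tail_upper (μ := μ S)
              (fun r => (hAmeas r q.1).inter (hAmeas r q.2)) (hpairInd q.1 q.2 hq12)
              (hPpairhi q.1 q.2 hq12) hδ0 hδ1
          have hexp : exp (-(δ^2/4) * (Υ^2*(p*(p*(R S:ℝ))))) ≤ e3 := by
            rw [he3_def]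
            apply Real.exp_le_exp.2
            have hΥ2 : (0:ℝ) ≤ 2*Υ^2 - 1 := by nlinarith only [hΥ, hΥ0]
            have hh := mul_nonneg (mul_nonneg (sq_nonneg δ)
              (mul_nonneg hp.le (mul_pos hp hRcast).le)) hΥ2
            nlinarith only [hh]
          rw [← ENNReal.ofReal_toReal (measure_ne_top (μ S) _)]
          exact ENNReal.ofReal_le_ofReal (ht.trans hexp)
        calc μ S _ + μ S _ ≤ ENNReal.ofReal e3 + ENNReal.ofReal e3 := add_le_add hl hh
          _ = ENNReal.ofReal (e3 + e3) := (ENNReal.ofReal_add he3nn he3nn).symm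
    -- the bad set
    set Bad := (⋃ r, Brl r ∪ Brh r) ∪ ((⋃ j, Bcl j ∪ Bch j) ∪ (⋃ q, Bp q)) with hBad_def
    have hBmeas : MeasurableSet Bad := by
      rw [hBad_def]
      apply MeasurableSet.union
      · apply MeasurableSet.iUnion; intro r
        apply MeasurableSet.union
        · rw [hBrl_def]
          exact measurableSet_le (Finset.measurable_sum _
            (fun j _ => measurable_const.indicator (hAmeas r j))) measurable_const
        · rw [hBrh_def]
          exact measurableSet_le measurable_const (Finset.measurable_sum _
            (fun j _ => measurable_const.indicator (hAmeas r j)))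
      apply MeasurableSet.union
      · apply MeasurableSet.iUnion; intro j
        apply MeasurableSet.union
        · rw [hBcl_def]
          exact measurableSet_le (Finset.measurable_sum _
            (fun i _ => measurable_const.indicator (hAmeas i j))) measurable_const
        · rw [hBch_def]
          exact measurableSet_le measurable_const (Finset.measurable_sum _
            (fun i _ => measurable_const.indicator (hAmeas i j)))
      · apply MeasurableSet.iUnion; intro q
        rw [hBp_def]
        by_cases hq12 : q.1 = q.2
        · simp [hq12]
        · simp only [if_neg hq12]
          apply MeasurableSet.union
          · exact measurableSet_le (Finset.measurable_sum _
              (fun r _ => measurable_const.indicator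
                ((hAmeas r q.1).inter (hAmeas r q.2)))) measurable_const
          · exact measurableSet_le measurable_const (Finset.measurable_sum _
              (fun r _ => measurable_const.indicator
                ((hAmeas r q.1).inter (hAmeas r q.2))))
    -- total bad measure
    have hμBad : μ S Bad ≤ ENNReal.ofReal (E S) := by
      have hterm1 : μ S (⋃ r, Brl r ∪ Brh r)
          ≤ ENNReal.ofReal (4*(S:ℝ)^ρ*exp (-(c*(S:ℝ)^(1-ρ)))) := by
        refine (measure_iUnion_fintype_le _ _).trans ?_
        have hterm : ∀ r, μ S (Brl r ∪ Brh r) ≤ ENNReal.ofReal (e1 + e1) := by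
          intro r
          refine (measure_union_le _ _).trans ?_
          rw [ENNReal.ofReal_add he1nn he1nn]
          exact add_le_add (hμBrl r) (hμBrh r)
        calc ∑ r, μ S (Brl r ∪ Brh r) ≤ ∑ _r : Fin (R S), ENNReal.ofReal (e1+e1) :=
              Finset.sum_le_sum (fun r _ => hterm r)
          _ = ((R S : ℕ) : ENNReal) * ENNReal.ofReal (e1+e1) := by
              rw [Finset.sum_const, Finset.card_univ, Fintype.card_fin, nsmul_eq_mul]
          _ = ENNReal.ofReal ((R S:ℝ) * (e1+e1)) := by
              rw [← ENNReal.ofReal_natCast (R S), ← ENNReal.ofReal_mul (Nat.cast_nonneg _)]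
          _ ≤ ENNReal.ofReal (4*(S:ℝ)^ρ*exp (-(c*(S:ℝ)^(1-ρ)))) := by
              apply ENNReal.ofReal_le_ofReal
              have he1b : e1 ≤ exp (-(c*(S:ℝ)^(1-ρ))) := by
                rw [he1_def, hc_def]
                apply Real.exp_le_exp.2
                have hh := mul_nonneg (by positivity : (0:ℝ) ≤ δ^2/8)
                  (sub_nonneg.2 ha_lb)
                nlinarith only [hh]
              calc (R S:ℝ)*(e1+e1) ≤ (2*(S:ℝ)^ρ) * (2 * exp (-(c*(S:ℝ)^(1-ρ)))) := by
                    apply mul_le_mul hRub (by linarith only [he1b])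
                      (by linarith only [he1nn]) (by positivity)
                _ = 4*(S:ℝ)^ρ*exp (-(c*(S:ℝ)^(1-ρ))) := by ring
      have hterm2 : μ S (⋃ j, Bcl j ∪ Bch j)
          ≤ ENNReal.ofReal (4*(S:ℝ)^κ*exp (-(c*(S:ℝ)^(1-κ)))) := by
        refine (measure_iUnion_fintype_le _ _).trans ?_
        have hterm : ∀ j, μ S (Bcl j ∪ Bch j) ≤ ENNReal.ofReal (e2 + e2) := by
          intro j
          refine (measure_union_le _ _).trans ?_
          rw [ENNReal.ofReal_add he2nn he2nn]
          exact add_le_add (hμBcl j) (hμBch j)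
        calc ∑ j, μ S (Bcl j ∪ Bch j) ≤ ∑ _j : Fin (C S), ENNReal.ofReal (e2+e2) :=
              Finset.sum_le_sum (fun j _ => hterm j)
          _ = ((C S : ℕ) : ENNReal) * ENNReal.ofReal (e2+e2) := by
              rw [Finset.sum_const, Finset.card_univ, Fintype.card_fin, nsmul_eq_mul]
          _ = ENNReal.ofReal ((C S:ℝ) * (e2+e2)) := by
              rw [← ENNReal.ofReal_natCast (C S), ← ENNReal.ofReal_mul (Nat.cast_nonneg _)]
          _ ≤ ENNReal.ofReal (4*(S:ℝ)^κ*exp (-(c*(S:ℝ)^(1-κ)))) := by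
              apply ENNReal.ofReal_le_ofReal
              have he2b : e2 ≤ exp (-(c*(S:ℝ)^(1-κ))) := by
                rw [he2_def, hc_def]
                apply Real.exp_le_exp.2
                have hh := mul_nonneg (by positivity : (0:ℝ) ≤ δ^2/8)
                  (sub_nonneg.2 hb_lb)
                nlinarith only [hh]
              calc (C S:ℝ)*(e2+e2) ≤ (2*(S:ℝ)^κ) * (2 * exp (-(c*(S:ℝ)^(1-κ)))) := by
                    apply mul_le_mul hCub (by linarith only [he2b])
                      (by linarith only [he2nn]) (by positivity)
                _ = 4*(S:ℝ)^κ*exp (-(c*(S:ℝ)^(1-κ))) := by ring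
      have hterm3 : μ S (⋃ q, Bp q)
          ≤ ENNReal.ofReal (8*(S:ℝ)^(2*κ)*exp (-(c*(S:ℝ)^(2-ρ-2*κ)))) := by
        refine (measure_iUnion_fintype_le _ _).trans ?_
        calc ∑ q, μ S (Bp q)
            ≤ ∑ _q : Fin (C S) × Fin (C S), ENNReal.ofReal (e3+e3) :=
              Finset.sum_le_sum (fun q _ => hμBp q)
          _ = ((C S * C S : ℕ) : ENNReal) * ENNReal.ofReal (e3+e3) := by
              rw [Finset.sum_const, Finset.card_univ, Fintype.card_prod, Fintype.card_fin,
                nsmul_eq_mul]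
          _ = ENNReal.ofReal (((C S : ℝ) * (C S : ℝ)) * (e3+e3)) := by
              rw [← ENNReal.ofReal_natCast (C S * C S),
                ← ENNReal.ofReal_mul (by positivity)]
              congr 1
              push_cast
              ring
          _ ≤ ENNReal.ofReal (8*(S:ℝ)^(2*κ)*exp (-(c*(S:ℝ)^(2-ρ-2*κ)))) := by
              apply ENNReal.ofReal_le_ofReal
              have he3b : e3 ≤ exp (-(c*(S:ℝ)^(2-ρ-2*κ))) := by
                rw [he3_def, hc_def]
                apply Real.exp_le_exp.2
                have hh := mul_nonneg (by positivity : (0:ℝ) ≤ δ^2/8)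
                  (sub_nonneg.2 hpb_lb)
                nlinarith only [hh]
              have hCC : (C S:ℝ) * (C S:ℝ) ≤ 4*(S:ℝ)^(2*κ) := by
                have hid : (S:ℝ)^(2*κ) = (S:ℝ)^κ * (S:ℝ)^κ := by
                  rw [← Real.rpow_add hSpos]; congr 1; ring
                rw [hid]
                have hh := mul_le_mul hCub hCub hCcast.le
                  (by positivity : (0:ℝ) ≤ 2*(S:ℝ)^κ)
                nlinarith only [hh]
              calc (C S:ℝ)*(C S:ℝ)*(e3+e3)
                  ≤ (4*(S:ℝ)^(2*κ)) * (2 * exp (-(c*(S:ℝ)^(2-ρ-2*κ)))) := by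
                    apply mul_le_mul hCC (by linarith only [he3b])
                      (by linarith only [he3nn]) (by positivity)
                _ = 8*(S:ℝ)^(2*κ)*exp (-(c*(S:ℝ)^(2-ρ-2*κ))) := by ring
      calc μ S Bad ≤ μ S (⋃ r, Brl r ∪ Brh r) + μ S ((⋃ j, Bcl j ∪ Bch j) ∪ (⋃ q, Bp q)) := by
            rw [hBad_def]; exact measure_union_le _ _
        _ ≤ μ S (⋃ r, Brl r ∪ Brh r) + (μ S (⋃ j, Bcl j ∪ Bch j) + μ S (⋃ q, Bp q)) := by
            exact add_le_add (le_refl _) (measure_union_le _ _)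
        _ ≤ ENNReal.ofReal (4*(S:ℝ)^ρ*exp (-(c*(S:ℝ)^(1-ρ))))
            + (ENNReal.ofReal (4*(S:ℝ)^κ*exp (-(c*(S:ℝ)^(1-κ))))
              + ENNReal.ofReal (8*(S:ℝ)^(2*κ)*exp (-(c*(S:ℝ)^(2-ρ-2*κ))))) :=
            add_le_add hterm1 (add_le_add hterm2 hterm3)
        _ = ENNReal.ofReal (E S) := by
            rw [← ENNReal.ofReal_add (by positivity) (by positivity),
              ← ENNReal.ofReal_add (by positivity) (by positivity)]
            congr 1
            rw [hE_def]
            ring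
    -- inclusion of the good event
    have hincl : Badᶜ ⊆ {ω |
        let z : Fin (R S) → Fin (C S) → ℝ := fun r j => if Z S r j ω then 1 else 0;
        let Nrow : Fin (R S) → ℝ := fun r => ∑ j, z r j;
        let Ncol : Fin (C S) → ℝ := fun j => ∑ i, z i j;
        let M1 : Matrix (Fin (C S)) (Fin (C S)) ℝ := fun j s =>
          (Ncol j + lamB)⁻¹ *
            ∑ r, z r s * (z r j - Ncol j / (R S : ℝ)) / (Nrow r + lamA);
        (⨆ s : Fin (C S), ∑ j : Fin (C S), |M1 j s|) ≤ Υ ^ 2 - (Υ⁻¹) ^ 2 + ε} := by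
      intro ω hω
      have hiz : ∀ (r : Fin (R S)) (j : Fin (C S)),
          (A r j).indicator (fun _ => (1:ℝ)) ω = (if Z S r j ω then (1:ℝ) else 0) := by
        intro r j
        cases hb : Z S r j ω <;> simp [Set.indicator_apply, hA_def, hb]
      have hizp : ∀ (r : Fin (R S)) (j s : Fin (C S)),
          (A r j ∩ A r s).indicator (fun _ => (1:ℝ)) ω
            = (if Z S r j ω then (1:ℝ) else 0) * (if Z S r s ω then (1:ℝ) else 0) := by
        intro r j s
        cases hb1 : Z S r j ω <;> cases hb2 : Z S r s ω <;>
          simp [Set.indicator_apply, hA_def, hb1, hb2]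
      have hrow1 : ∀ r, (1-δ) * (p*(C S:ℝ)) ≤ ∑ j, (if Z S r j ω then (1:ℝ) else 0) := by
        intro r
        have hno : ω ∉ Brl r := fun hmem => hω (Or.inl (Set.mem_iUnion.2 ⟨r, Or.inl hmem⟩))
        rw [hBrl_def] at hno
        simp only [Set.mem_setOf_eq, not_le] at hno
        calc (1-δ)*(p*(C S:ℝ)) ≤ ∑ j, (A r j).indicator (fun _ => (1:ℝ)) ω := hno.le
          _ = ∑ j, (if Z S r j ω then (1:ℝ) else 0) :=
            Finset.sum_congr rfl (fun j _ => hiz r j)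
      have hrow2 : ∀ r, ∑ j, (if Z S r j ω then (1:ℝ) else 0) ≤ (1+δ) * (Υ*(p*(C S:ℝ))) := by
        intro r
        have hno : ω ∉ Brh r := fun hmem => hω (Or.inl (Set.mem_iUnion.2 ⟨r, Or.inr hmem⟩))
        rw [hBrh_def] at hno
        simp only [Set.mem_setOf_eq, not_le] at hno
        calc ∑ j, (if Z S r j ω then (1:ℝ) else 0)
            = ∑ j, (A r j).indicator (fun _ => (1:ℝ)) ω :=
              Finset.sum_congr rfl (fun j _ => (hiz r j).symm)
          _ ≤ (1+δ) * (Υ*(p*(C S:ℝ))) := hno.le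
      have hcol1 : ∀ j, (1-δ) * (p*(R S:ℝ)) ≤ ∑ i, (if Z S i j ω then (1:ℝ) else 0) := by
        intro j
        have hno : ω ∉ Bcl j := fun hmem =>
          hω (Or.inr (Or.inl (Set.mem_iUnion.2 ⟨j, Or.inl hmem⟩)))
        rw [hBcl_def] at hno
        simp only [Set.mem_setOf_eq, not_le] at hno
        calc (1-δ)*(p*(R S:ℝ)) ≤ ∑ i, (A i j).indicator (fun _ => (1:ℝ)) ω := hno.le
          _ = ∑ i, (if Z S i j ω then (1:ℝ) else 0) :=
            Finset.sum_congr rfl (fun i _ => hiz i j)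
      have hcol2 : ∀ j, ∑ i, (if Z S i j ω then (1:ℝ) else 0) ≤ (1+δ) * (Υ*(p*(R S:ℝ))) := by
        intro j
        have hno : ω ∉ Bch j := fun hmem =>
          hω (Or.inr (Or.inl (Set.mem_iUnion.2 ⟨j, Or.inr hmem⟩)))
        rw [hBch_def] at hno
        simp only [Set.mem_setOf_eq, not_le] at hno
        calc ∑ i, (if Z S i j ω then (1:ℝ) else 0)
            = ∑ i, (A i j).indicator (fun _ => (1:ℝ)) ω :=
              Finset.sum_congr rfl (fun i _ => (hiz i j).symm)
          _ ≤ (1+δ) * (Υ*(p*(R S:ℝ))) := hno.le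
      have hpairz : ∀ j s : Fin (C S), j ≠ s →
          (1-δ) * (p*(p*(R S:ℝ))) ≤ ∑ r, (if Z S r j ω then (1:ℝ) else 0)
              * (if Z S r s ω then (1:ℝ) else 0)
          ∧ ∑ r, (if Z S r j ω then (1:ℝ) else 0) * (if Z S r s ω then (1:ℝ) else 0)
              ≤ (1+δ) * (Υ^2*(p*(p*(R S:ℝ)))) := by
        intro j s hjs
        have hno : ω ∉ Bp (j, s) := fun hmem =>
          hω (Or.inr (Or.inr (Set.mem_iUnion.2 ⟨(j,s), hmem⟩)))
        rw [hBp_def] at hno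
        simp only [if_neg hjs] at hno
        rw [Set.mem_union, not_or] at hno
        obtain ⟨hno1, hno2⟩ := hno
        simp only [Set.mem_setOf_eq, not_le] at hno1 hno2
        have heqs : ∑ r, (A r j ∩ A r s).indicator (fun _ => (1:ℝ)) ω
            = ∑ r, (if Z S r j ω then (1:ℝ) else 0) * (if Z S r s ω then (1:ℝ) else 0) :=
          Finset.sum_congr rfl (fun r _ => hizp r j s)
        constructor
        · calc (1-δ)*(p*(p*(R S:ℝ)))
              ≤ ∑ r, (A r j ∩ A r s).indicator (fun _ => (1:ℝ)) ω := hno1.le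
            _ = _ := heqs
        · calc ∑ r, (if Z S r j ω then (1:ℝ) else 0) * (if Z S r s ω then (1:ℝ) else 0)
              = ∑ r, (A r j ∩ A r s).indicator (fun _ => (1:ℝ)) ω := heqs.symm
            _ ≤ (1+δ) * (Υ^2*(p*(p*(R S:ℝ)))) := hno2.le
      have hz01 : ∀ (r : Fin (R S)) (j : Fin (C S)),
          (if Z S r j ω then (1:ℝ) else 0) = 0 ∨ (if Z S r j ω then (1:ℝ) else 0) = 1 := by
        intro r j
        by_cases hb : Z S r j ω <;> simp [hb]
      have hdiaga : 2 / (p * (C S:ℝ)) ≤ δ := by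
        rw [div_le_iff₀ (by positivity)]
        have hmono : δ * (S:ℝ)^(1-ρ) ≤ δ * (p * (C S:ℝ)) :=
          mul_le_mul_of_nonneg_left ha_lb hδ0.le
        linarith only [h2S, hmono]
      have hlamAa : lamA ≤ δ * (Υ * (p * (C S:ℝ))) := by
        have hmono : δ * Υ * (S:ℝ)^(1-ρ) ≤ δ * Υ * (p * (C S:ℝ)) :=
          mul_le_mul_of_nonneg_left ha_lb (by positivity)
        calc lamA ≤ δ * Υ * (S:ℝ)^(1-ρ) := hlamAS
          _ ≤ δ * Υ * (p * (C S:ℝ)) := hmono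
          _ = δ * (Υ * (p * (C S:ℝ))) := by ring
      have hdet := stmt14_det_bound (R S) (C S) hRpos hCpos
          (fun r j => if Z S r j ω then (1:ℝ) else 0) hz01 lamA lamB Υ δ p
          hΥ hδ0 hδhalf hp hlamA hlamB hlamAa hdiaga hrow1 hrow2 hcol1 hcol2
          (fun j s hjs => by
            have h := (hpairz s j (fun h => hjs h.symm)).1
            calc (1-δ) * (p*(p*(R S:ℝ)))
                ≤ ∑ r, (if Z S r s ω then (1:ℝ) else 0) * (if Z S r j ω then (1:ℝ) else 0) := h
              _ = ∑ r, (fun r j => if Z S r j ω then (1:ℝ) else 0) r s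
                  * (fun r j => if Z S r j ω then (1:ℝ) else 0) r j := rfl)
          (fun j s hjs => by
            have h := (hpairz s j (fun h => hjs h.symm)).2
            exact h)
      exact le_trans hdet hconst
    -- conclude
    calc 1 - ENNReal.ofReal (E S) ≤ 1 - μ S Bad := tsub_le_tsub_left hμBad 1
      _ = μ S Badᶜ := (prob_compl_eq_one_sub hBmeas).symm
      _ ≤ _ := measure_mono hincl

  have := tendsto_of_tendsto_of_tendsto_of_le_of_le' hlow tendsto_const_nhds hmain
      (Eventually.of_forall hub)
  simpa using this
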